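/- Let F(x) = ∑_{i=1}^n f_i(x) with f_i(x) = ψ_i(a_iᵀx), ψ_i'' ∈ [1/M, M], AᵀA ≻ 0, minimizer x*. Let p be a probability vector over [n] with p_k = τ_k/∑τ_j, τ_k = min(1, 20u_k log d), u_k ≥ σ_k(A). For any x̃, define f̃_k(x) := (1/p_k)(f_k(x) − ∇f_k(x̃)ᵀx) + ∇F(x̃)ᵀx. Then E_{k∼p}[‖∇f̃_k(x*)‖²_{(AᵀA)^{-1}}] ≤ 2(∑_j τ_j)·M·(F(x̃) − F(x*)). -/

import Mathlib

open Matrix BigOperators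

lemma tangent_le (f : ℝ → ℝ) (hf : Differentiable ℝ f) (hf' : Differentiable ℝ (deriv f))
    (h2 : ∀ t, 0 ≤ deriv (deriv f) t) (b y : ℝ) :
    f b + deriv f b * (y - b) ≤ f y := by
  have hmono : Monotone (deriv f) := monotone_of_deriv_nonneg hf' h2
  rcases lt_trichotomy b y with h | h | h
  · obtain ⟨c, hc, hceq⟩ := exists_deriv_eq_slope f h hf.continuous.continuousOn
      (fun x _ => (hf x).differentiableWithinAt)
    have h1 : deriv f b ≤ deriv f c := hmono hc.1.le
    rw [eq_div_iff (sub_ne_zero.mpr h.ne')] at hceq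
    nlinarith
  · simp [h]
  · obtain ⟨c, hc, hceq⟩ := exists_deriv_eq_slope f h hf.continuous.continuousOn
      (fun x _ => (hf x).differentiableWithinAt)
    have h1 : deriv f c ≤ deriv f b := hmono hc.2.le
    rw [eq_div_iff (sub_ne_zero.mpr h.ne')] at hceq
    nlinarith

lemma deriv2_diff (f : ℝ → ℝ) (h : ContDiff ℝ 2 f) : Differentiable ℝ (deriv f) := by
  have h2 : ContDiff ℝ ((1:ℕ)+1) f := by exact_mod_cast h
  exact (contDiff_succ_iff_deriv.mp h2).2.2.differentiable (by norm_num)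

lemma smooth_breg (ψ : ℝ → ℝ) (M : ℝ) (hM : 0 < M) (hψd : ContDiff ℝ 2 ψ)
    (hlo : ∀ t, 1 / M ≤ deriv (deriv ψ) t) (hhi : ∀ t, deriv (deriv ψ) t ≤ M) (a b : ℝ) :
    (deriv ψ b - deriv ψ a) ^ 2 ≤ 2 * M * (ψ b - ψ a - deriv ψ a * (b - a)) := by
  have hψ1 : Differentiable ℝ ψ := hψd.differentiable (by norm_num)
  have hψ2 : Differentiable ℝ (deriv ψ) := deriv2_diff ψ hψd
  set δ := deriv ψ b - deriv ψ a with hδ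
  set y := b - δ / M with hy
  have h1 : ψ a + deriv ψ a * (y - a) ≤ ψ y :=
    tangent_le ψ hψ1 hψ2 (fun t => le_trans (by positivity) (hlo t)) a y
  set φ : ℝ → ℝ := fun t => M / 2 * t ^ 2 - ψ t with hφ
  have hq : Differentiable ℝ (fun t : ℝ => M / 2 * t ^ 2) := by fun_prop
  have hφ1 : Differentiable ℝ φ := hq.sub hψ1
  have hφd : deriv φ = fun t => M * t - deriv ψ t := by
    funext t
    rw [hφ]
    rw [deriv_fun_sub (hq t) (hψ1 t)]
    have : deriv (fun t : ℝ => M / 2 * t ^ 2) t = M * t := by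
      rw [deriv_const_mul _ (by fun_prop)]
      simp [deriv_pow]
      ring
    rw [this]
  have hφ2 : Differentiable ℝ (deriv φ) := by
    rw [hφd]; exact (differentiable_id.const_mul M).sub hψ2
  have hφdd : ∀ t, 0 ≤ deriv (deriv φ) t := by
    intro t
    rw [hφd]
    have : deriv (fun t => M * t - deriv ψ t) t = M - deriv (deriv ψ) t := by
      rw [deriv_fun_sub (by fun_prop) (hψ2 t)]
      have : deriv (fun t : ℝ => M * t) t = M := by
        simpa using ((hasDerivAt_id t).const_mul M).deriv
      rw [this]
    rw [this]
    linarith [hhi t]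
  have h2 : φ b + deriv φ b * (y - b) ≤ φ y := tangent_le φ hφ1 hφ2 hφdd b y
  rw [hφd] at h2
  simp only [hφ] at h2
  rw [hy] at h1 h2
  have eA : M / 2 * (b - δ / M) ^ 2 = M / 2 * b ^ 2 - b * δ + δ * (δ / M) / 2 := by
    field_simp; ring
  have eB : (M * b - deriv ψ b) * ((b - δ / M) - b) = -(b * δ) + deriv ψ b * (δ / M) := by
    field_simp; ring
  have eC : deriv ψ a * ((b - δ / M) - a) = deriv ψ a * (b - a) - deriv ψ a * (δ / M) := by
    ring
  have eD : deriv ψ b * (δ / M) - deriv ψ a * (δ / M) = δ * (δ / M) := by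
    rw [hδ]; ring
  have hkey : δ * (δ / M) ≤ 2 * (ψ b - ψ a - deriv ψ a * (b - a)) := by
    linarith [h1, h2, eA, eB, eC, eD]
  have hsq : δ ^ 2 = M * (δ * (δ / M)) := by field_simp
  calc δ ^ 2 = M * (δ * (δ / M)) := hsq
    _ ≤ M * (2 * (ψ b - ψ a - deriv ψ a * (b - a))) :=
        mul_le_mul_of_nonneg_left hkey hM.le
    _ = 2 * M * (ψ b - ψ a - deriv ψ a * (b - a)) := by ring

lemma quad_expand {d : ℕ} (B : Matrix (Fin d) (Fin d) ℝ) (c : ℝ) (v G : Fin d → ℝ) :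
    (c • v + G) ⬝ᵥ (B *ᵥ (c • v + G)) =
      c * (c * (v ⬝ᵥ (B *ᵥ v))) + c * (v ⬝ᵥ (B *ᵥ G)) + c * (G ⬝ᵥ (B *ᵥ v)) + G ⬝ᵥ (B *ᵥ G) := by
  simp [mulVec_add, mulVec_smul, dotProduct_add, add_dotProduct, smul_dotProduct,
    dotProduct_smul, smul_eq_mul]
  ring

lemma Qsym {d : ℕ} (B : Matrix (Fin d) (Fin d) ℝ) (hB : Bᵀ = B) (x y : Fin d → ℝ) :
    x ⬝ᵥ (B *ᵥ y) = y ⬝ᵥ (B *ᵥ x) := by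
  rw [dotProduct_mulVec, ← mulVec_transpose, hB, dotProduct_comm]

lemma leverage_le_one {n d : ℕ} (A : Matrix (Fin n) (Fin d) ℝ) (hPD : (Aᵀ * A).PosDef)
    (k : Fin n) : A k ⬝ᵥ ((Aᵀ * A)⁻¹ *ᵥ A k) ≤ 1 := by
  set C := Aᵀ * A with hC
  set a := A k with ha
  set w := C⁻¹ *ᵥ a with hw
  have hdet : IsUnit C.det := isUnit_iff_ne_zero.mpr hPD.det_pos.ne'
  have hCw : C *ᵥ w = a := by
    rw [hw, mulVec_mulVec, mul_nonsing_inv C hdet, one_mulVec]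
  have hquad : w ⬝ᵥ (C *ᵥ w) = (A *ᵥ w) ⬝ᵥ (A *ᵥ w) := by
    rw [hC, ← mulVec_mulVec, dotProduct_mulVec, vecMul_transpose]
  set σ := a ⬝ᵥ w with hσ
  have hσ0 : 0 ≤ σ := by
    rcases eq_or_ne w 0 with h0 | h0
    · have : a = 0 := by rw [← hCw, h0, mulVec_zero]
      simp [hσ, this]
    · have h1 : 0 < w ⬝ᵥ (C *ᵥ w) := by simpa using hPD.dotProduct_mulVec_pos h0
      rw [hCw] at h1
      have h2 : 0 < w ⬝ᵥ a := h1
      rw [hσ, dotProduct_comm]; exact h2.le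
  have hterm : ((A *ᵥ w) k) ^ 2 ≤ (A *ᵥ w) ⬝ᵥ (A *ᵥ w) := by
    rw [sq, dotProduct]
    exact Finset.single_le_sum (f := fun i => (A *ᵥ w) i * (A *ᵥ w) i)
      (fun i _ => mul_self_nonneg _) (Finset.mem_univ k)
  have hAwk : (A *ᵥ w) k = σ := by
    rfl
  have hws : w ⬝ᵥ (C *ᵥ w) = σ := by rw [hCw, dotProduct_comm, ← hσ]
  have hσσ : σ ^ 2 ≤ σ := by
    calc σ ^ 2 = ((A *ᵥ w) k) ^ 2 := by rw [hAwk]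
      _ ≤ (A *ᵥ w) ⬝ᵥ (A *ᵥ w) := hterm
      _ = w ⬝ᵥ (C *ᵥ w) := hquad.symm
      _ = σ := hws
  nlinarith [hσ0, hσσ]

lemma sum_dotProduct' {n d : ℕ} (f : Fin n → Fin d → ℝ) (w : Fin d → ℝ) :
    (∑ j, f j) ⬝ᵥ w = ∑ j, f j ⬝ᵥ w := by
  simp only [dotProduct, Finset.sum_apply, Finset.sum_mul]
  exact Finset.sum_comm

lemma grad_zero {n d : ℕ} (A : Matrix (Fin n) (Fin d) ℝ)
    (ψ : Fin n → ℝ → ℝ) (hψd : ∀ i, ContDiff ℝ 2 (ψ i))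
    (F : (Fin d → ℝ) → ℝ) (hF : ∀ x, F x = ∑ i, ψ i (A i ⬝ᵥ x))
    (xs : Fin d → ℝ) (hxs : IsMinOn F Set.univ xs) :
    ∑ j, deriv (ψ j) (A j ⬝ᵥ xs) • A j = 0 := by
  have hdiff : ∀ i, Differentiable ℝ (ψ i) := fun i => (hψd i).differentiable (by norm_num)
  have hL : ∀ v : Fin d → ℝ, ∑ j, deriv (ψ j) (A j ⬝ᵥ xs) * (A j ⬝ᵥ v) = 0 := by
    intro v
    have hder : HasDerivAt (fun t : ℝ => F (xs + t • v))
        (∑ j, deriv (ψ j) (A j ⬝ᵥ xs) * (A j ⬝ᵥ v)) 0 := by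
      have heq : (fun t : ℝ => F (xs + t • v)) =
          fun t => ∑ j, ψ j (A j ⬝ᵥ xs + t * (A j ⬝ᵥ v)) := by
        funext t
        rw [hF]
        congr 1
        funext j
        rw [dotProduct_add, dotProduct_smul, smul_eq_mul]
      rw [heq]
      apply HasDerivAt.fun_sum
      intro j _
      have h1 : HasDerivAt (fun t : ℝ => A j ⬝ᵥ xs + t * (A j ⬝ᵥ v)) (A j ⬝ᵥ v) 0 := by
        simpa using ((hasDerivAt_id (0:ℝ)).mul_const (A j ⬝ᵥ v)).const_add (A j ⬝ᵥ xs)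
      have h2 : HasDerivAt (ψ j) (deriv (ψ j) (A j ⬝ᵥ xs + 0 * (A j ⬝ᵥ v)))
          (A j ⬝ᵥ xs + 0 * (A j ⬝ᵥ v)) := (hdiff j _).hasDerivAt
      have := h2.comp (0:ℝ) h1
      simpa [Function.comp_def] using this
    have hmin : IsLocalMin (fun t : ℝ => F (xs + t • v)) 0 := by
      have : IsMinOn (fun t : ℝ => F (xs + t • v)) Set.univ 0 := by
        intro t _
        have h0 : xs + (0:ℝ) • v = xs := by simp
        simp only [Set.mem_setOf_eq, h0]
        exact hxs (Set.mem_univ _)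
      exact this.isLocalMin Filter.univ_mem
    exact hmin.hasDerivAt_eq_zero hder
  set G0 := ∑ j, deriv (ψ j) (A j ⬝ᵥ xs) • A j with hG0
  have hdot : G0 ⬝ᵥ G0 = 0 := by
    have : G0 ⬝ᵥ G0 = ∑ j, deriv (ψ j) (A j ⬝ᵥ xs) * (A j ⬝ᵥ G0) := by
      rw [hG0, sum_dotProduct']
      congr 1; funext j
      rw [smul_dotProduct, smul_eq_mul]
    rw [this, hL]
  exact dotProduct_self_eq_zero.mp hdot

theorem stmt_19 {n d : ℕ} (hd : 2 ≤ d) (A : Matrix (Fin n) (Fin d) ℝ)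
    (hPD : (Aᵀ * A).PosDef)
    (ψ : Fin n → ℝ → ℝ) (M : ℝ) (hM : 1 ≤ M)
    (hψd : ∀ i, ContDiff ℝ 2 (ψ i))
    (hψ : ∀ i t, 1 / M ≤ deriv (deriv (ψ i)) t ∧ deriv (deriv (ψ i)) t ≤ M)
    (u τ p : Fin n → ℝ)
    (hu : ∀ k, A k ⬝ᵥ ((Aᵀ * A)⁻¹ *ᵥ A k) ≤ u k)
    (hτ : ∀ k, τ k = min 1 (20 * u k * Real.log d))
    (hp : ∀ k, p k = τ k / ∑ j, τ j)
    (F : (Fin d → ℝ) → ℝ) (hF : ∀ x, F x = ∑ i, ψ i (A i ⬝ᵥ x))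
    (xs xt : Fin d → ℝ) (hxs : IsMinOn F Set.univ xs)
    (g : Fin n → (Fin d → ℝ) → (Fin d → ℝ))
    (hg : ∀ k x, g k x = deriv (ψ k) (A k ⬝ᵥ x) • A k) :
    ∑ k, p k *
      (((1 / p k) • (g k xs - g k xt) + ∑ j, g j xt) ⬝ᵥ
        ((Aᵀ * A)⁻¹ *ᵥ ((1 / p k) • (g k xs - g k xt) + ∑ j, g j xt))) ≤
      2 * (∑ j, τ j) * M * (F xt - F xs) := by
  have hM0 : (0:ℝ) < M := lt_of_lt_of_le one_pos hM
  have hBpd : ((Aᵀ * A)⁻¹).PosDef := hPD.inv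
  have hBsym : ((Aᵀ * A)⁻¹)ᵀ = (Aᵀ * A)⁻¹ := by
    have h := hBpd.isHermitian
    ext i j
    have := congrFun (congrFun h i) j
    simpa using this
  -- scalars
  have hlog : (1:ℝ) ≤ 20 * Real.log d := by
    have h2 : (2:ℝ) ≤ (d:ℝ) := by exact_mod_cast hd
    have hl : Real.log 2 ≤ Real.log d := Real.log_le_log (by norm_num) h2
    have hl2 := Real.log_two_gt_d9
    linarith
  have hσ0 : ∀ k, 0 ≤ A k ⬝ᵥ ((Aᵀ * A)⁻¹ *ᵥ A k) := fun k => by simpa using hBpd.posSemidef.dotProduct_mulVec_nonneg (A k)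
  have hσ1 : ∀ k, A k ⬝ᵥ ((Aᵀ * A)⁻¹ *ᵥ A k) ≤ 1 := leverage_le_one A hPD
  have hu0 : ∀ k, 0 ≤ u k := fun k => le_trans (hσ0 k) (hu k)
  have hld : (0:ℝ) < Real.log d := by linarith
  have hτ0 : ∀ k, 0 ≤ τ k := by
    intro k
    rw [hτ]
    exact le_min zero_le_one (mul_nonneg (by nlinarith [hu0 k]) hld.le)
  have hστ : ∀ k, A k ⬝ᵥ ((Aᵀ * A)⁻¹ *ᵥ A k) ≤ τ k := by
    intro k
    rw [hτ]
    exact le_min (hσ1 k) (by nlinarith [hu k, hσ0 k, hu0 k, hlog])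
  set S := ∑ j, τ j with hS
  have hS0 : 0 ≤ S := Finset.sum_nonneg fun k _ => hτ0 k
  rcases eq_or_lt_of_le hS0 with hS0' | hSpos
  · -- degenerate: S = 0
    have hpz : ∀ k, p k = 0 := by
      intro k
      rw [hp, ← hS0', div_zero]
    simp only [hpz, zero_mul, Finset.sum_const_zero]
    rw [← hS0']
    nlinarith [hM0]
  -- main case
  set α := fun k => deriv (ψ k) (A k ⬝ᵥ xs) with hα
  set β := fun k => deriv (ψ k) (A k ⬝ᵥ xt) with hβ
  have hG0 : ∑ j, α j • A j = 0 := grad_zero A ψ hψd F hF xs hxs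
  have hvk : ∀ k, g k xs - g k xt = (α k - β k) • A k := by
    intro k
    rw [hg, hg, sub_smul]
  have hsumv : ∑ k, (g k xs - g k xt) = -(∑ j, g j xt) := by
    rw [Finset.sum_sub_distrib]
    have h1 : ∑ k, g k xs = 0 := by
      rw [Finset.sum_congr rfl (fun k _ => hg k xs)]
      exact hG0
    rw [h1, zero_sub]
  have hp0 : ∀ k, 0 ≤ p k := fun k => by rw [hp]; exact div_nonneg (hτ0 k) hS0
  -- p k = 0 → the difference vector vanishes
  have hpv : ∀ k, p k = 0 → g k xs - g k xt = 0 := by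
    intro k hk
    rw [hp, div_eq_zero_iff] at hk
    have hτk : τ k = 0 := hk.resolve_right hSpos.ne'
    rw [hτ] at hτk
    have hx0 : 20 * u k * Real.log d = 0 := by
      by_contra h
      have hge : 0 ≤ 20 * u k * Real.log d := mul_nonneg (by nlinarith [hu0 k]) hld.le
      have : 0 < min 1 (20 * u k * Real.log d) :=
        lt_min one_pos (lt_of_le_of_ne hge (Ne.symm h))
      linarith [this.trans_eq hτk]
    have huk : u k = 0 := by
      rcases (hu0 k).eq_or_lt with h | h
      · exact h.symm
      · nlinarith
    have hσk : A k ⬝ᵥ ((Aᵀ * A)⁻¹ *ᵥ A k) = 0 :=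
      le_antisymm (le_trans (hu k) huk.le) (hσ0 k)
    have hak : A k = 0 := by
      by_contra h
      have : 0 < A k ⬝ᵥ ((Aᵀ * A)⁻¹ *ᵥ A k) := by simpa using hBpd.dotProduct_mulVec_pos h
      linarith [this.trans_eq hσk]
    rw [hvk, hak, smul_zero]
  -- expansion of each summand
  have key : ∀ k, p k *
      (((1 / p k) • (g k xs - g k xt) + ∑ j, g j xt) ⬝ᵥ
        ((Aᵀ * A)⁻¹ *ᵥ ((1 / p k) • (g k xs - g k xt) + ∑ j, g j xt)))
      = p k * ((1 / p k) * ((1 / p k) *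
          ((g k xs - g k xt) ⬝ᵥ ((Aᵀ * A)⁻¹ *ᵥ (g k xs - g k xt)))))
        + 2 * ((p k * (1 / p k)) *
          ((g k xs - g k xt) ⬝ᵥ ((Aᵀ * A)⁻¹ *ᵥ (∑ j, g j xt))))
        + p k * ((∑ j, g j xt) ⬝ᵥ ((Aᵀ * A)⁻¹ *ᵥ (∑ j, g j xt))) := by
    intro k
    rw [quad_expand]
    rw [Qsym _ hBsym (∑ j, g j xt) (g k xs - g k xt)]
    ring
  rw [Finset.sum_congr rfl (fun k _ => key k)]
  rw [Finset.sum_add_distrib, Finset.sum_add_distrib]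
  -- middle term
  have hmid : ∑ k, 2 * ((p k * (1 / p k)) *
      ((g k xs - g k xt) ⬝ᵥ ((Aᵀ * A)⁻¹ *ᵥ (∑ j, g j xt))))
      = -2 * ((∑ j, g j xt) ⬝ᵥ ((Aᵀ * A)⁻¹ *ᵥ (∑ j, g j xt))) := by
    have hterm : ∀ k, 2 * ((p k * (1 / p k)) *
        ((g k xs - g k xt) ⬝ᵥ ((Aᵀ * A)⁻¹ *ᵥ (∑ j, g j xt))))
        = 2 * ((g k xs - g k xt) ⬝ᵥ ((Aᵀ * A)⁻¹ *ᵥ (∑ j, g j xt))) := by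
      intro k
      rcases eq_or_ne (p k) 0 with h | h
      · rw [hpv k h]
        simp
      · rw [mul_one_div, div_self h, one_mul]
    rw [Finset.sum_congr rfl (fun k _ => hterm k), ← Finset.mul_sum,
      ← sum_dotProduct' (fun k => g k xs - g k xt), hsumv, neg_dotProduct]
    ring
  rw [hmid]
  -- last term
  have hpsum : ∑ k, p k = 1 := by
    simp only [hp]
    rw [← Finset.sum_div, div_self hSpos.ne']
  have hlast : ∑ k, p k * ((∑ j, g j xt) ⬝ᵥ ((Aᵀ * A)⁻¹ *ᵥ (∑ j, g j xt)))
      = (∑ j, g j xt) ⬝ᵥ ((Aᵀ * A)⁻¹ *ᵥ (∑ j, g j xt)) := by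
    rw [← Finset.sum_mul, hpsum, one_mul]
  rw [hlast]
  have hQGG : 0 ≤ (∑ j, g j xt) ⬝ᵥ ((Aᵀ * A)⁻¹ *ᵥ (∑ j, g j xt)) :=
    by simpa using hBpd.posSemidef.dotProduct_mulVec_nonneg (∑ j, g j xt)
  -- bound the first term
  have hT1 : ∀ k, p k * ((1 / p k) * ((1 / p k) *
      ((g k xs - g k xt) ⬝ᵥ ((Aᵀ * A)⁻¹ *ᵥ (g k xs - g k xt)))))
      ≤ S * (β k - α k) ^ 2 := by
    intro k
    have hQvv : (g k xs - g k xt) ⬝ᵥ ((Aᵀ * A)⁻¹ *ᵥ (g k xs - g k xt))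
        = (β k - α k) ^ 2 * (A k ⬝ᵥ ((Aᵀ * A)⁻¹ *ᵥ A k)) := by
      rw [hvk, smul_dotProduct, mulVec_smul, dotProduct_smul]
      simp only [smul_eq_mul]
      ring
    rcases eq_or_ne (p k) 0 with h | h
    · rw [h]
      simp only [zero_mul]
      positivity
    · have hτk : τ k ≠ 0 := by
        intro h0
        apply h
        rw [hp, h0, zero_div]
      have hτpos : 0 < τ k := lt_of_le_of_ne (hτ0 k) (Ne.symm hτk)
      have hpp : p k * (1 / p k) = 1 := by field_simp
      have h1p : 1 / p k = S / τ k := by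
        rw [hp, one_div_div]
      calc p k * ((1 / p k) * ((1 / p k) *
            ((g k xs - g k xt) ⬝ᵥ ((Aᵀ * A)⁻¹ *ᵥ (g k xs - g k xt)))))
          = (p k * (1 / p k)) * ((1 / p k) *
            ((g k xs - g k xt) ⬝ᵥ ((Aᵀ * A)⁻¹ *ᵥ (g k xs - g k xt)))) := by ring
        _ = (S / τ k) * ((β k - α k) ^ 2 * (A k ⬝ᵥ ((Aᵀ * A)⁻¹ *ᵥ A k))) := by
            rw [hpp, one_mul, h1p, hQvv]
        _ = (S * (β k - α k) ^ 2) * ((A k ⬝ᵥ ((Aᵀ * A)⁻¹ *ᵥ A k)) / τ k) := by ring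
        _ ≤ (S * (β k - α k) ^ 2) * 1 := by
            apply mul_le_mul_of_nonneg_left _ (by positivity)
            rw [div_le_one hτpos]
            exact hστ k
        _ = S * (β k - α k) ^ 2 := by ring
  have hsumT1 : ∑ k, p k * ((1 / p k) * ((1 / p k) *
      ((g k xs - g k xt) ⬝ᵥ ((Aᵀ * A)⁻¹ *ᵥ (g k xs - g k xt)))))
      ≤ S * ∑ k, (β k - α k) ^ 2 := by
    rw [Finset.mul_sum]
    exact Finset.sum_le_sum fun k _ => hT1 k
  -- Bregman bound
  have hbreg : ∀ k, (β k - α k) ^ 2 ≤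
      2 * M * (ψ k (A k ⬝ᵥ xt) - ψ k (A k ⬝ᵥ xs) - α k * (A k ⬝ᵥ xt - A k ⬝ᵥ xs)) := by
    intro k
    exact smooth_breg (ψ k) M hM0 (hψd k) (fun t => (hψ k t).1) (fun t => (hψ k t).2) _ _
  have hzero : ∑ k, α k * (A k ⬝ᵥ xt - A k ⬝ᵥ xs) = 0 := by
    have hterm : ∀ k, α k * (A k ⬝ᵥ xt - A k ⬝ᵥ xs) = (α k • A k) ⬝ᵥ (xt - xs) := by
      intro k
      rw [smul_dotProduct, dotProduct_sub, smul_eq_mul]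
    rw [Finset.sum_congr rfl (fun k _ => hterm k), ← sum_dotProduct', hG0, zero_dotProduct]
  have hbregsum : ∑ k, (β k - α k) ^ 2 ≤ 2 * M * (F xt - F xs) := by
    calc ∑ k, (β k - α k) ^ 2
        ≤ ∑ k, 2 * M * (ψ k (A k ⬝ᵥ xt) - ψ k (A k ⬝ᵥ xs) - α k * (A k ⬝ᵥ xt - A k ⬝ᵥ xs)) :=
          Finset.sum_le_sum fun k _ => hbreg k
      _ = 2 * M * (F xt - F xs) := by
          rw [← Finset.mul_sum]
          congr 1
          rw [Finset.sum_sub_distrib, Finset.sum_sub_distrib, hzero, hF, hF]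
          ring
  have hfinal : S * ∑ k, (β k - α k) ^ 2 ≤ S * (2 * M * (F xt - F xs)) :=
    mul_le_mul_of_nonneg_left hbregsum hSpos.le
  nlinarith [hsumT1, hfinal, hQGG]
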